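/- (q-Bernoulli α,β lemma.) Let A_q(t) = Σ_{n≥0} b_{n,q} t^n/[n]_q! (so that A_q(t)·(e_q(t)−1) = t), and define (α_n), (β_n) by t·(D_q A_q)(t) = (Σ α_n t^n/[n]_q!)·A_q(qt) and A_q(t) = (Σ β_n t^n/[n]_q!)·A_q(qt) in K[[t]]. Then α_0 = 0 and, for all n ≥ 1, α_n = −(1/q) Σ_{k=0}^{n} [n choose k]_q b_{k,q} and β_n = ((q−1)/q) Σ_{k=0}^{n} [n choose k]_q b_{k,q}, while β_0 = 1. In particular α_1 = −1/[2]_q and α_n = −b_{n,q}/q for all n ≥ 2. -/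

import Mathlib

noncomputable section

open Finset MvPolynomial

/-- The `q`-integer `[n]_q = 1 + q + ⋯ + q^(n-1)`. -/
def qInt {K : Type*} [Field K] (q : K) (n : ℕ) : K := ∑ i ∈ Finset.range n, q ^ i

/-- The `q`-factorial `[n]_q! = [1]_q [2]_q ⋯ [n]_q`. -/
def qFact {K : Type*} [Field K] (q : K) (n : ℕ) : K := ∏ k ∈ Finset.range n, qInt q (k + 1)

/-- The `q`-binomial coefficient `[n choose k]_q`. -/
def qChoose {K : Type*} [Field K] (q : K) (n k : ℕ) : K :=
  qFact q n / (qFact q k * qFact q (n - k))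

/-- The partial `q`-derivative in the variable `v` (v = 0 is `x`, v = 1 is `y`),
the linear operator determined by `D_{q,x}(x^m y^l) = [m]_q x^(m-1) y^l` and
`D_{q,y}(x^m y^l) = [l]_q x^m y^(l-1)`. -/
def qDeriv {K : Type*} [Field K] (q : K) (v : Fin 2) (P : MvPolynomial (Fin 2) K) :
    MvPolynomial (Fin 2) K :=
  ∑ m ∈ P.support, monomial (m - Finsupp.single v 1) (P.coeff m * qInt q (m v))

/-- Substitution `x ↦ c·x` in a polynomial in the two variables `x = X 0`, `y = X 1`. -/
def substX {K : Type*} [Field K] (c : K) (P : MvPolynomial (Fin 2) K) :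
    MvPolynomial (Fin 2) K :=
  aeval (fun i : Fin 2 => if i = 0 then C c * X 0 else X 1) P

/-- Substitution `y ↦ c·y` in a polynomial in the two variables `x = X 0`, `y = X 1`. -/
def substY {K : Type*} [Field K] (c : K) (P : MvPolynomial (Fin 2) K) :
    MvPolynomial (Fin 2) K :=
  aeval (fun i : Fin 2 => if i = 0 then X 0 else C c * X 1) P

/-- The 2D `q`-Appell polynomials attached to a coefficient sequence `a`:
`A_{n,q}(x,y) = Σ_{i+j+k=n} ([n]_q!/([i]_q![j]_q![k]_q!)) a_i q^(k(k-1)/2) x^j y^k`. -/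
def appell {K : Type*} [Field K] (q : K) (a : ℕ → K) (n : ℕ) : MvPolynomial (Fin 2) K :=
  ∑ i ∈ Finset.range (n + 1), ∑ j ∈ Finset.range (n + 1 - i),
    monomial (Finsupp.single (0 : Fin 2) j + Finsupp.single (1 : Fin 2) (n - i - j))
      (qFact q n / (qFact q i * qFact q j * qFact q (n - i - j)) * a i *
        q ^ ((n - i - j) * (n - i - j - 1) / 2))

namespace QBaux
variable {K : Type*} [Field K] {q : K}

lemma qInt_one : qInt q 1 = 1 := by simp [qInt]
lemma qInt_two : qInt q 2 = 1 + q := by simp [qInt, Finset.sum_range_succ]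
lemma qFact_zero : qFact q 0 = 1 := by simp [qFact]
lemma qFact_one : qFact q 1 = 1 := by simp [qFact, qInt]
lemma qFact_succ (n : ℕ) : qFact q (n+1) = qFact q n * qInt q (n+1) :=
  Finset.prod_range_succ _ _
lemma qFact_ne_zero (hq : ∀ n : ℕ, 1 ≤ n → qInt q n ≠ 0) (n : ℕ) : qFact q n ≠ 0 :=
  Finset.prod_ne_zero_iff.2 fun k _ => hq _ (Nat.succ_le_succ (Nat.zero_le _))
lemma qInt_mul (n : ℕ) : (q - 1) * qInt q n = q ^ n - 1 := by
  rw [qInt, mul_comm, geom_sum_mul]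
lemma qChoose_self (hq : ∀ n : ℕ, 1 ≤ n → qInt q n ≠ 0) (n : ℕ) : qChoose q n n = 1 := by
  simp [qChoose, qFact_zero, div_self (qFact_ne_zero hq n)]
lemma qChoose_zero (hq : ∀ n : ℕ, 1 ≤ n → qInt q n ≠ 0) (n : ℕ) : qChoose q n 0 = 1 := by
  simp [qChoose, qFact_zero, div_self (qFact_ne_zero hq n)]
lemma qChoose_two_one : qChoose q 2 1 = qInt q 2 := by
  simp [qChoose, qFact_succ, qFact_one, qFact_zero, qInt_one]

lemma qsum (hq : ∀ n : ℕ, 1 ≤ n → qInt q n ≠ 0)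
    (b : ℕ → K) (hb0 : b 0 = 1)
    (hb : ∀ n : ℕ, 2 ≤ n → ∑ k ∈ Finset.range n, qChoose q n k * b k = 0) (n : ℕ) :
    (∑ k ∈ Finset.range n, qChoose q n k * b k) = if n = 1 then 1 else 0 := by
  match n, hb with
  | 0, _ => simp
  | 1, _ => simp [qChoose_zero hq, hb0]
  | (n+2), hb => simpa using hb (n+2) (by omega)

end QBaux

open QBaux

theorem qBernoulli_core
    {K : Type*} [Field K] (q : K) (hq0 : q ≠ 0) (hq1 : q ≠ 1)
    (hq : ∀ n : ℕ, 1 ≤ n → qInt q n ≠ 0)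
    (b : ℕ → K) (hb0 : b 0 = 1)
    (hb : ∀ n : ℕ, 2 ≤ n → ∑ k ∈ Finset.range n, qChoose q n k * b k = 0) :
    (PowerSeries.mk (fun n => b n * q ^ n / qFact q n)) *
      ((PowerSeries.C (q-1)) * (PowerSeries.mk (fun n => b n / qFact q n))
        + (PowerSeries.C (q-1)) * PowerSeries.X + 1)
      = (PowerSeries.C q) * (PowerSeries.mk (fun n => b n / qFact q n)) := by
  set A : PowerSeries K := PowerSeries.mk (fun n => b n / qFact q n) with hA
  set B : PowerSeries K := PowerSeries.mk (fun n => b n * q ^ n / qFact q n) with hBdef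
  set E : PowerSeries K := PowerSeries.mk (fun n => 1 / qFact q n) with hE
  have hF := qFact_ne_zero hq (q := q)
  -- the sums
  have hsum : ∀ n : ℕ, (∑ k ∈ Finset.range n, qChoose q n k * b k) =
      if n = 1 then 1 else 0 := qsum hq b hb0 hb
  -- A * (E - 1) = X
  have hAE : A * (E - 1) = PowerSeries.X := by
    ext n
    rw [PowerSeries.coeff_mul, Finset.Nat.sum_antidiagonal_eq_sum_range_succ_mk,
      Finset.sum_range_succ]
    simp only [hA, hE, PowerSeries.coeff_mk, map_sub, PowerSeries.coeff_one]
    rw [Nat.sub_self]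
    simp only [qFact_zero, if_pos rfl]
    have step : ∀ k ∈ Finset.range n,
        b k / qFact q k * (1 / qFact q (n - k) - if n - k = 0 then 1 else 0)
          = qChoose q n k * b k / qFact q n := by
      intro k hk
      have hk' : k < n := Finset.mem_range.1 hk
      rw [if_neg (by omega), qChoose]
      field_simp
      rw [sub_zero, div_eq_div_iff (hF k)
        (mul_ne_zero (mul_ne_zero (hF k) (hF (n-k))) (hF n))]
      have := hF (n-k); have := hF n; have := hF k
      field_simp
    rw [Finset.sum_congr rfl step, ← Finset.sum_div, hsum n]
    rcases n with _ | _ | n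
    · simp
    · simp [qFact_one]
    · simp [PowerSeries.coeff_X]
  -- B = rescale q A, Eq := rescale q E
  have hB : B = PowerSeries.rescale q A := by
    ext n
    rw [PowerSeries.coeff_rescale]
    simp only [hA, hBdef, PowerSeries.coeff_mk]
    ring
  set Eq : PowerSeries K := PowerSeries.rescale q E with hEq
  have hBEq : B * (Eq - 1) = PowerSeries.C q * PowerSeries.X := by
    rw [hB, hEq, ← map_one (PowerSeries.rescale q), ← map_sub, ← map_mul, hAE,
      PowerSeries.rescale_X]
  -- Eq = E + C (q-1) * (X * E)
  have hEq2 : Eq = E + PowerSeries.C (q-1) * (PowerSeries.X * E) := by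
    ext n
    rw [map_add, PowerSeries.coeff_C_mul, PowerSeries.coeff_rescale]
    cases n with
    | zero => simp [hE, qFact_zero]
    | succ m =>
      rw [PowerSeries.coeff_succ_X_mul]
      simp only [hE, PowerSeries.coeff_mk]
      have h2 : (q - 1) * qInt q (m+1) = q ^ (m+1) - 1 := qInt_mul _
      have hI : qInt q (m+1) ≠ 0 := hq (m+1) (Nat.succ_le_succ (Nat.zero_le m))
      have hFm : qFact q m ≠ 0 := hF m
      rw [qFact_succ]
      field_simp
      linear_combination (-1 : K) * h2
  -- E - 1 ≠ 0
  have hE1 : E - 1 ≠ (0 : PowerSeries K) := by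
    intro h
    have := congrArg (PowerSeries.coeff 1) h
    simp [hE, qFact_one] at this
  -- the key cancellation
  have step : (PowerSeries.C (q-1) * A + PowerSeries.C (q-1) * PowerSeries.X + 1)
      * (E - 1) = Eq - 1 := by
    rw [hEq2]
    linear_combination (PowerSeries.C (q-1)) * hAE
  apply mul_right_cancel₀ hE1
  calc B * (PowerSeries.C (q-1) * A + PowerSeries.C (q-1) * PowerSeries.X + 1) * (E - 1)
      = B * (Eq - 1) := by rw [mul_assoc, step]
    _ = PowerSeries.C q * PowerSeries.X := hBEq
    _ = PowerSeries.C q * A * (E - 1) := by rw [mul_assoc, hAE]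


/-- `q`-Bernoulli `α`, `β` lemma. -/
theorem qBernoulli_alpha_beta
    {K : Type*} [Field K] [CharZero K] (q : K) (hq0 : q ≠ 0) (hq1 : q ≠ 1)
    (hq : ∀ n : ℕ, 1 ≤ n → qInt q n ≠ 0)
    (b : ℕ → K) (hb0 : b 0 = 1)
    (hb : ∀ n : ℕ, 2 ≤ n → ∑ k ∈ Finset.range n, qChoose q n k * b k = 0)
    (α β : ℕ → K)
    (hα : PowerSeries.mk (fun n => if n = 0 then (0 : K) else b n / qFact q (n - 1)) =
      PowerSeries.mk (fun n => α n / qFact q n) *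
        PowerSeries.mk (fun n => b n * q ^ n / qFact q n))
    (hβ : PowerSeries.mk (fun n => b n / qFact q n) =
      PowerSeries.mk (fun n => β n / qFact q n) *
        PowerSeries.mk (fun n => b n * q ^ n / qFact q n)) :
    α 0 = 0 ∧
    (∀ n : ℕ, 1 ≤ n →
      α n = -(1 / q) * ∑ k ∈ Finset.range (n + 1), qChoose q n k * b k) ∧
    (∀ n : ℕ, 1 ≤ n →
      β n = ((q - 1) / q) * ∑ k ∈ Finset.range (n + 1), qChoose q n k * b k) ∧
    β 0 = 1 ∧
    α 1 = -(1 / qInt q 2) ∧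
    (∀ n : ℕ, 2 ≤ n → α n = -(b n) / q) := by
  have hF := qFact_ne_zero hq (q := q)
  have key := qBernoulli_core q hq0 hq1 hq b hb0 hb
  set A : PowerSeries K := PowerSeries.mk (fun n => b n / qFact q n) with hA
  set B : PowerSeries K := PowerSeries.mk (fun n => b n * q ^ n / qFact q n) with hBdef
  set G : PowerSeries K :=
    PowerSeries.mk (fun n => if n = 0 then (0 : K) else b n / qFact q (n - 1)) with hGdef
  have hBne : B ≠ 0 := by
    intro h
    have := congrArg (PowerSeries.coeff 0) h
    simp [hBdef, hb0, qFact_zero] at this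
  have hCne : PowerSeries.C (q - 1) ≠ 0 := by
    intro h
    have := congrArg (PowerSeries.coeff 0) h
    rw [PowerSeries.coeff_zero_C, map_zero, sub_eq_zero] at this
    exact hq1 this
  have hG : PowerSeries.C (q - 1) * G = B - A := by
    ext n
    rw [PowerSeries.coeff_C_mul, map_sub]
    simp only [hA, hBdef, hGdef, PowerSeries.coeff_mk]
    cases n with
    | zero => simp
    | succ m =>
      rw [if_neg (Nat.succ_ne_zero m), Nat.succ_sub_one]
      have h2 := qInt_mul (q := q) (m + 1)
      have hI : qInt q (m + 1) ≠ 0 := hq (m + 1) (Nat.succ_le_succ (Nat.zero_le m))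
      have hFm : qFact q m ≠ 0 := hF m
      rw [qFact_succ]
      field_simp
      linear_combination (b (m + 1)) * h2
  have h1 : PowerSeries.C q * (B - A) =
      PowerSeries.C (q - 1) * (1 - A - PowerSeries.X) * B := by
    have hC : PowerSeries.C q - 1 - PowerSeries.C (q - 1) = 0 := by
      rw [map_sub, map_one]; ring
    linear_combination key + B * hC
  have h2 : (PowerSeries.C (q - 1) * B) *
        (PowerSeries.C q * PowerSeries.mk (fun n => α n / qFact q n)) =
      (PowerSeries.C (q - 1) * B) * (1 - A - PowerSeries.X) := by
    calc (PowerSeries.C (q - 1) * B) *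
          (PowerSeries.C q * PowerSeries.mk (fun n => α n / qFact q n))
        = PowerSeries.C q *
            (PowerSeries.C (q - 1) *
              (PowerSeries.mk (fun n => α n / qFact q n) * B)) := by ring
      _ = PowerSeries.C q * (PowerSeries.C (q - 1) * G) := by rw [← hα]
      _ = PowerSeries.C q * (B - A) := by rw [hG]
      _ = _ := by rw [h1]; ring
  have αeq : PowerSeries.C q * PowerSeries.mk (fun n => α n / qFact q n)
      = 1 - A - PowerSeries.X := mul_left_cancel₀ (mul_ne_zero hCne hBne) h2
  have h3 : B * (PowerSeries.C q * PowerSeries.mk (fun n => β n / qFact q n)) =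
      B * (PowerSeries.C q + PowerSeries.C (q - 1) * (A + PowerSeries.X - 1)) := by
    have hC : (1 : PowerSeries K) - PowerSeries.C q + PowerSeries.C (q - 1) = 0 := by
      rw [map_sub, map_one]; ring
    calc B * (PowerSeries.C q * PowerSeries.mk (fun n => β n / qFact q n))
        = PowerSeries.C q * (PowerSeries.mk (fun n => β n / qFact q n) * B) := by ring
      _ = PowerSeries.C q * A := by rw [← hβ]
      _ = _ := by linear_combination (-1 : PowerSeries K) * key + B * hC
  have βeq : PowerSeries.C q * PowerSeries.mk (fun n => β n / qFact q n)
      = PowerSeries.C q + PowerSeries.C (q - 1) * (A + PowerSeries.X - 1) :=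
    mul_left_cancel₀ hBne h3
  -- coefficient extraction
  have hαc : ∀ n : ℕ, q * (α n / qFact q n) =
      (if n = 0 then 1 else 0) - b n / qFact q n - (if n = 1 then 1 else 0) := by
    intro n
    have := congrArg (PowerSeries.coeff n) αeq
    simpa [hA, PowerSeries.coeff_C_mul, PowerSeries.coeff_one, PowerSeries.coeff_X] using this
  have βeq2 : PowerSeries.C q * PowerSeries.mk (fun n => β n / qFact q n)
      = PowerSeries.C q + PowerSeries.C (q - 1) * A + PowerSeries.C (q - 1) * PowerSeries.X
        - PowerSeries.C (q - 1) := by rw [βeq]; ring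
  have hβc : ∀ n : ℕ, q * (β n / qFact q n) =
      (if n = 0 then q else 0) + (q - 1) * (b n / qFact q n) +
        (q - 1) * (if n = 1 then 1 else 0) - (if n = 0 then (q - 1) else 0) := by
    intro n
    have := congrArg (PowerSeries.coeff n) βeq2
    simpa only [hA, LinearMap.map_sub, map_add, PowerSeries.coeff_C_mul,
      PowerSeries.coeff_mk, PowerSeries.coeff_C, PowerSeries.coeff_X, mul_ite, mul_one,
      mul_zero] using this
  have hα0 : α 0 = 0 := by
    have := hαc 0
    rw [qFact_zero, hb0] at this
    simp at this
    rcases this with h | h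
    · exact absurd h hq0
    · exact h
  have hα1 : α 1 = (-b 1 - 1) / q := by
    have := hαc 1
    rw [qFact_one] at this
    simp at this
    field_simp
    linear_combination this
  have hαn : ∀ n : ℕ, 2 ≤ n → α n = -(b n) / q := by
    intro n hn
    have h := hαc n
    rw [if_neg (by omega), if_neg (by omega)] at h
    have hFn : qFact q n ≠ 0 := hF n
    field_simp at h
    field_simp
    linear_combination h
  have hβ0 : β 0 = 1 := by
    have h := hβc 0
    rw [qFact_zero, hb0] at h
    norm_num at h
    have h' : q * β 0 = q * 1 := by rw [mul_one]; linear_combination h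
    exact mul_left_cancel₀ hq0 h'
  have hβ1 : β 1 = (q - 1) * (b 1 + 1) / q := by
    have h := hβc 1
    rw [qFact_one] at h
    norm_num at h
    field_simp
    linear_combination h
  have hβn : ∀ n : ℕ, 2 ≤ n → β n = (q - 1) * b n / q := by
    intro n hn
    have h := hβc n
    rw [if_neg (by omega), if_neg (by omega), if_neg (by omega)] at h
    have hFn : qFact q n ≠ 0 := hF n
    field_simp at h
    field_simp
    linear_combination h
  have Sval : ∀ n : ℕ, (∑ k ∈ Finset.range (n + 1), qChoose q n k * b k) =
      (if n = 1 then 1 else 0) + b n := by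
    intro n
    rw [Finset.sum_range_succ, qsum hq b hb0 hb n, qChoose_self hq, one_mul]
  have hb1 : b 1 = -(1 / qInt q 2) := by
    have h := hb 2 (le_refl 2)
    rw [Finset.sum_range_succ, Finset.sum_range_one, qChoose_zero hq, qChoose_two_one,
      hb0, one_mul] at h
    have h2ne : qInt q 2 ≠ 0 := hq 2 (by omega)
    field_simp
    linear_combination h
  refine ⟨hα0, ?_, ?_, hβ0, ?_, hαn⟩
  · intro n hn
    rw [Sval n]
    rcases eq_or_lt_of_le hn with h | h
    · rw [← h, if_pos rfl, hα1]
      ring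
    · rw [if_neg (by omega), hαn n (by omega), zero_add]
      ring
  · intro n hn
    rw [Sval n]
    rcases eq_or_lt_of_le hn with h | h
    · rw [← h, if_pos rfl, hβ1]
      ring
    · rw [if_neg (by omega), hβn n (by omega), zero_add]
      ring
  · rw [hα1, hb1, qInt_two]
    have h2ne : (1 : K) + q ≠ 0 := by
      have := hq 2 (by omega)
      rwa [qInt_two] at this
    field_simp
    ring
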